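/- For each k > 0, A_k = {I_k ∈ Ω_k : f_{I_k}(K) ∩ ∂K ≠ ∅}, where A_k denotes the set of length-k truncations of sequences in A = {I ∈ Ω : f_{I_m}(K) ∩ ∂K ≠ ∅ for all m > 0}. In particular, every finite sequence I_k with f_{I_k}(K) ∩ ∂K ≠ ∅ extends to an infinite sequence I with f_{I_m}(K) ∩ ∂K ≠ ∅ for all m. -/
import Mathlib


/-- `seqComp f I k = f (I 0) ∘ f (I 1) ∘ ⋯ ∘ f (I (k-1))`. -/
def seqComp {X : Type*} {n : ℕ} (f : Fin n → X → X) (I : ℕ → Fin n) : ℕ → X → X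
  | 0 => id
  | (k + 1) => seqComp f I k ∘ f (I k)

/-- `finComp f p = f (p 0) ∘ f (p 1) ∘ ⋯ ∘ f (p (k-1))` for a finite sequence `p`. -/
def finComp {X : Type*} {n : ℕ} (f : Fin n → X → X) : ∀ {k : ℕ}, (Fin k → Fin n) → X → X
  | 0, _ => id
  | (k + 1), p => finComp f (fun j : Fin k => p j.castSucc) ∘ f (p (Fin.last k))

lemma seqComp_eq_finComp {X : Type*} {n : ℕ} (f : Fin n → X → X) (I : ℕ → Fin n) :
    ∀ k, seqComp f I k = finComp f (fun j : Fin k => I j.val)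
  | 0 => rfl
  | (k+1) => by
    show seqComp f I k ∘ f (I k) = _
    rw [seqComp_eq_finComp f I k]
    show _ = finComp f (fun j : Fin k => I ((j.castSucc : Fin (k+1)).val)) ∘ f (I (Fin.last k).val)
    simp

lemma finComp_snoc {X : Type*} {n m : ℕ} (f : Fin n → X → X) (q : Fin m → Fin n) (i : Fin n) :
    finComp f (Fin.snoc q i) = finComp f q ∘ f i := by
  funext x
  simp only [finComp, Function.comp_apply, Fin.snoc_castSucc, Fin.snoc_last]

lemma trunc_one {X : Type*} {n m : ℕ} (f : Fin n → X → X) (K : Set X)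
    (hsub : ∀ i, f i '' K ⊆ K) (q : Fin (m+1) → Fin n) :
    finComp f q '' K ⊆ finComp f (fun j : Fin m => q j.castSucc) '' K := by
  rintro x ⟨y, hy, rfl⟩
  exact ⟨f (q (Fin.last m)) y, hsub _ ⟨y, hy, rfl⟩, rfl⟩

lemma trunc_le {X : Type*} {n : ℕ} (f : Fin n → X → X) (K : Set X)
    (hsub : ∀ i, f i '' K ⊆ K) :
    ∀ (m' m : ℕ) (hle : m ≤ m') (q : Fin m' → Fin n),
      finComp f q '' K ⊆ finComp f (fun j : Fin m => q ⟨j.val, lt_of_lt_of_le j.2 hle⟩) '' K := by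
  intro m'
  induction m' with
  | zero =>
    intro m hle q
    obtain rfl : m = 0 := Nat.le_zero.mp hle
    have : (fun j : Fin 0 => q ⟨j.val, lt_of_lt_of_le j.2 hle⟩) = q :=
      funext fun j => congrArg q (Fin.ext rfl)
    rw [this]
  | succ m' ih =>
    intro m hle q
    rcases Nat.lt_or_ge m (m'+1) with h | h
    · have hle' : m ≤ m' := Nat.lt_succ_iff.mp h
      refine (trunc_one f K hsub q).trans ?_
      refine (ih m hle' (fun j : Fin m' => q j.castSucc)).trans ?_
      have : (fun j : Fin m => q (Fin.castSucc ⟨j.val, lt_of_lt_of_le j.2 hle'⟩))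
          = (fun j : Fin m => q ⟨j.val, lt_of_lt_of_le j.2 hle⟩) :=
        funext fun j => congrArg q (Fin.ext rfl)
      rw [this]
    · obtain rfl : m = m' + 1 := le_antisymm hle h
      have : (fun j : Fin (m'+1) => q ⟨j.val, lt_of_lt_of_le j.2 hle⟩) = q :=
        funext fun j => congrArg q (Fin.ext rfl)
      rw [this]

/-- `A_k = {I_k ∈ Ω_k : f_{I_k}(K) ∩ ∂K ≠ ∅}`: a finite sequence `p` of length `k`
satisfies `f_p(K) ∩ ∂K ≠ ∅` if and only if it is the truncation of an infinite
sequence `I` with `f_{I_m}(K) ∩ ∂K ≠ ∅` for all `m > 0`. -/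
theorem Ak_eq_truncations (l n : ℕ)
    (f : Fin n → EuclideanSpace ℝ (Fin l) → EuclideanSpace ℝ (Fin l))
    (c : Fin n → ℝ) (hc : ∀ i, 0 < c i ∧ c i < 1)
    (hsim : ∀ i x y, dist (f i x) (f i y) = c i * dist x y)
    (K : Set (EuclideanSpace ℝ (Fin l))) (hKne : K.Nonempty) (hKc : IsCompact K)
    (hK : K = ⋃ i, f i '' K) :
    ∀ k : ℕ, 0 < k → ∀ p : Fin k → Fin n,
      (finComp f p '' K ∩ frontier K).Nonempty ↔
        ∃ I : ℕ → Fin n, (∀ j : Fin k, I j = p j) ∧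
          ∀ m, 0 < m → (seqComp f I m '' K ∩ frontier K).Nonempty := by
  have hsub : ∀ i, f i '' K ⊆ K := by
    intro i
    rw [hK]
    exact Set.subset_iUnion_of_subset i (by rw [← hK])
  intro k hk p
  constructor
  · intro h
    -- step lemma
    have step : ∀ (m : ℕ) (q : Fin m → Fin n),
        (finComp f q '' K ∩ frontier K).Nonempty →
        ∃ i : Fin n, (finComp f (Fin.snoc q i) '' K ∩ frontier K).Nonempty := by
      intro m q ⟨x, ⟨y, hy, hxy⟩, hxF⟩
      rw [hK] at hy
      obtain ⟨_, ⟨i, rfl⟩, z, hz, rfl⟩ := hy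
      exact ⟨i, x, ⟨z, hz, by rw [finComp_snoc]; exact hxy⟩, hxF⟩
    let Q : ∀ m : ℕ, {q : Fin (k+m) → Fin n // (finComp f q '' K ∩ frontier K).Nonempty} := fun m =>
      Nat.rec ⟨p, h⟩
        (fun m qm => ⟨Fin.snoc qm.1 (step _ qm.1 qm.2).choose,
          (step _ qm.1 qm.2).choose_spec⟩) m
    have hQsucc : ∀ m, (Q (m+1)).1 = Fin.snoc (Q m).1 (step _ (Q m).1 (Q m).2).choose :=
      fun m => rfl
    have hcons : ∀ m (j : ℕ) (h1 : j < k+m) (h2 : j < k+(m+1)),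
        (Q (m+1)).1 ⟨j, h2⟩ = (Q m).1 ⟨j, h1⟩ := by
      intro m j h1 h2
      rw [hQsucc]
      have : (⟨j, h2⟩ : Fin (k+m+1)) = Fin.castSucc ⟨j, h1⟩ := Fin.ext rfl
      rw [this, Fin.snoc_castSucc]
    have hconsLe : ∀ (m m' : ℕ), m ≤ m' → ∀ (j : ℕ) (h1 : j < k+m) (h2 : j < k+m'),
        (Q m').1 ⟨j, h2⟩ = (Q m).1 ⟨j, h1⟩ := by
      intro m m' hle
      induction m' with
      | zero =>
        obtain rfl : m = 0 := Nat.le_zero.mp hle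
        intro j h1 h2; rfl
      | succ m' ih =>
        intro j h1 h2
        rcases Nat.lt_or_ge m (m'+1) with hlt | hge
        · have hle' : m ≤ m' := Nat.lt_succ_iff.mp hlt
          have h2' : j < k+m' := lt_of_lt_of_le h1 (by omega)
          rw [hcons m' j h2' h2]
          exact ih hle' j h1 h2'
        · obtain rfl : m = m' + 1 := le_antisymm hle hge
          rfl
    let I : ℕ → Fin n := fun j => (Q (j+1)).1 ⟨j, by omega⟩
    refine ⟨I, ?_, ?_⟩
    · intro j
      exact (hconsLe 0 (j.val+1) (by omega) j.val (by omega) (by omega)).trans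
        (congrArg p (Fin.ext rfl))
    · intro m hm
      rw [seqComp_eq_finComp]
      have hag : (fun j : Fin m => I j.val)
          = (fun j : Fin m => (Q m).1 ⟨j.val, lt_of_lt_of_le j.2 (Nat.le_add_left m k)⟩) := by
        funext j
        show (Q (j.val+1)).1 ⟨j.val, by omega⟩ = _
        rcases Nat.le_total (j.val+1) m with hle | hle
        · exact (hconsLe (j.val+1) m hle j.val (by omega) (by omega)).symm
        · exact hconsLe m (j.val+1) hle j.val (by omega) (by omega)
      rw [hag]
      exact (Q m).2.mono (Set.inter_subset_inter_left _
        (trunc_le f K hsub (k+m) m (Nat.le_add_left m k) (Q m).1))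
  · rintro ⟨I, hIp, hall⟩
    have : p = fun j : Fin k => I j.val := funext fun j => (hIp j).symm
    rw [this, ← seqComp_eq_finComp]
    exact hall k hk
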